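/- If C is a C-logics on L, then there exists a restricted fC-model ⟨M, ⊨, f⟩ such that C(A) = Th(f(Mod(A))) for every A ⊆ L. -/
import Mathlib


/-- `ModSet sat A` is the set of models satisfying every formula of `A`. -/
def ModSet {M L : Type*} (sat : M → L → Prop) (A : Set L) : Set M :=
  {m | ∀ a ∈ A, sat m a}

/-- `ThSet sat X` is the set of formulas satisfied by every model of `X`. -/
def ThSet {M L : Type*} (sat : M → L → Prop) (X : Set M) : Set L :=
  {a | ∀ m ∈ X, sat m a}

lemma thset_mem {L : Type u} (X : Set (Set L)) :
    ThSet (fun m a => a ∈ m) X = ⋂₀ X := by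
  ext a; simp [ThSet, Set.mem_sInter]

lemma modset_mem {L : Type u} (A : Set L) :
    ModSet (fun (m : Set L) a => a ∈ m) A = {m | A ⊆ m} := by
  ext m; simp [ModSet, Set.subset_def]

/-- Representation: every C-logics is defined by some restricted fC-model. -/
theorem stmt_10 {L : Type u} [Nonempty L] (C : Set L → Set L)
    (hIncl : ∀ A : Set L, A ⊆ C A)
    (hCum : ∀ A B : Set L, A ⊆ B → B ⊆ C A → C A = C B) :
    ∃ (M : Type u) (sat : M → L → Prop) (f : Set M → Set M),
      (∀ X : Set M, f X ⊆ X) ∧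
      (∀ X Y : Set M, f X ⊆ Y → Y ⊆ X → f Y = f X) ∧
      (∀ X : Set M, f X = ∅ → X = ∅) ∧
      (∀ A : Set L, C A = ThSet sat (f (ModSet sat A))) := by
  classical
  set sat : Set L → L → Prop := fun m a => a ∈ m with hsat
  set f : Set (Set L) → Set (Set L) := fun X =>
    if C (⋂₀ X) ∈ X then {C (⋂₀ X)} else X with hf
  refine ⟨Set L, sat, f, ?_, ?_, ?_, ?_⟩
  · intro X m hm
    simp only [hf] at hm
    split at hm
    · rename_i h; rw [Set.mem_singleton_iff] at hm; exact hm ▸ h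
    · exact hm
  · intro X Y hfY hYX
    by_cases h : C (⋂₀ X) ∈ X
    · have hfX : f X = {C (⋂₀ X)} := by simp [hf, h]
      have htY : C (⋂₀ X) ∈ Y := hfY (by rw [hfX]; exact rfl)
      have h1 : ⋂₀ X ⊆ ⋂₀ Y := Set.sInter_subset_sInter hYX
      have h2 : ⋂₀ Y ⊆ C (⋂₀ X) := Set.sInter_subset_of_mem htY
      have hC : C (⋂₀ X) = C (⋂₀ Y) := hCum _ _ h1 h2
      rw [hfX, hf]
      simp only
      rw [← hC, if_pos htY]
    · have hfX : f X = X := by simp [hf, h]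
      have : Y = X := le_antisymm hYX (hfX ▸ hfY)
      rw [this]
  · intro X hX
    by_cases h : C (⋂₀ X) ∈ X
    · exfalso
      have : f X = {C (⋂₀ X)} := by simp [hf, h]
      rw [this] at hX
      exact (Set.singleton_ne_empty _) hX
    · have : f X = X := by simp [hf, h]
      rwa [this] at hX
  · intro A
    have hMod : ModSet sat A = {m | A ⊆ m} := modset_mem A
    have hInt : ⋂₀ (ModSet sat A) = A := by
      rw [hMod]
      apply le_antisymm
      · exact Set.sInter_subset_of_mem (by exact fun _ h => h)
      · exact fun a ha m hm => hm ha
    have hCmem : C A ∈ ModSet sat A := by rw [hMod]; exact hIncl A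
    have : f (ModSet sat A) = {C A} := by
      simp only [hf, hInt]
      rw [if_pos hCmem]
    rw [this, hsat, thset_mem]
    simp
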